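/- For every graphon W, m_{K_{1,1,t}}(W) ≥ 2^{1-e(K_{1,1,t})} = 2^{-2t}, i.e., the graph K_{1,1,t} (t triangles sharing a common edge) is common, assuming the inequalities t_{K_{1,1,t}}(W) ≥ t_{K_3}(W)^t / t_{K_2}(W)^{t-1} (and the same with 1-W), Lemma 2.3, and m_{K_3}(W) ≥ 1/4. -/

import Mathlib

open MeasureTheory

/-- Homomorphism density of a finite simple graph `G` in a kernel
`W : [0,1]² → ℝ` (symmetrised, which agrees with the usual definition for
symmetric `W`). -/
noncomputable def homDensity {V : Type*} [Fintype V] [DecidableEq V]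
    (G : SimpleGraph V) (W : unitInterval → unitInterval → ℝ) : ℝ :=
  letI := Classical.decRel G.Adj
  ∫ x : V → unitInterval, ∏ e ∈ G.edgeFinset,
    Sym2.lift ⟨fun a b => (W (x a) (x b) + W (x b) (x a)) / 2, fun a b => by ring⟩ e

/-- `W` is a graphon: measurable, symmetric, with values in `[0,1]`. -/
def IsGraphon (W : unitInterval → unitInterval → ℝ) : Prop :=
  Measurable (fun p : unitInterval × unitInterval => W p.1 p.2) ∧
    (∀ x y, W x y = W y x) ∧ (∀ x y, 0 ≤ W x y) ∧ (∀ x y, W x y ≤ 1)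

/-- The complementary graphon `1 - W`. -/
def compl' (W : unitInterval → unitInterval → ℝ) : unitInterval → unitInterval → ℝ :=
  fun x y => 1 - W x y

/-- The complete tripartite graph `K_{1,1,t}`, with parts `{0}`, `{1}` and
`{2,…,t+1}` inside `Fin (t+2)`: `t` triangles sharing a common edge. -/
def K11 (t : ℕ) : SimpleGraph (Fin (t + 2)) :=
  SimpleGraph.fromRel (fun i j => i.val < 2 ∨ j.val < 2)

section Helpers

open unitInterval

/-- The symmetrised edge weight, as a function of a point of `[0,1]^n` and an edge. -/
noncomputable def kerFun (W : I → I → ℝ) {n : ℕ} (x : Fin n → I) : Sym2 (Fin n) → ℝ :=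
  Sym2.lift ⟨fun a b => (W (x a) (x b) + W (x b) (x a)) / 2, fun a b => by ring⟩

lemma kerFun_mk (W : I → I → ℝ) {n : ℕ} (x : Fin n → I) (a b : Fin n) :
    kerFun W x s(a, b) = (W (x a) (x b) + W (x b) (x a)) / 2 := rfl

lemma homDensity_eq {n : ℕ} (G : SimpleGraph (Fin n)) (W : I → I → ℝ)
    [Fintype G.edgeSet] :
    homDensity G W = ∫ x : Fin n → I, ∏ e ∈ G.edgeFinset, kerFun W x e := by
  unfold homDensity kerFun
  congr!

lemma kerFun_measurable {W : I → I → ℝ} (hW : Measurable fun p : I × I => W p.1 p.2)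
    {n : ℕ} (e : Sym2 (Fin n)) : Measurable fun x : Fin n → I => kerFun W x e := by
  induction e using Sym2.ind with
  | _ a b =>
    simp only [kerFun_mk]
    have m1 : Measurable fun x : Fin n → I => W (x a) (x b) :=
      hW.comp' (f := fun x : Fin n → I => (x a, x b)) ((measurable_pi_apply a).prodMk (measurable_pi_apply b))
    have m2 : Measurable fun x : Fin n → I => W (x b) (x a) :=
      hW.comp' (f := fun x : Fin n → I => (x b, x a)) ((measurable_pi_apply b).prodMk (measurable_pi_apply a))
    exact (m1.add m2).div_const 2

lemma kerFun_nonneg {W : I → I → ℝ} (hW : IsGraphon W) {n : ℕ} (x : Fin n → I)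
    (e : Sym2 (Fin n)) : 0 ≤ kerFun W x e := by
  induction e using Sym2.ind with
  | _ a b =>
    rw [kerFun_mk]
    have h1 := hW.2.2.1 (x a) (x b)
    have h2 := hW.2.2.1 (x b) (x a)
    linarith

lemma kerFun_le_one {W : I → I → ℝ} (hW : IsGraphon W) {n : ℕ} (x : Fin n → I)
    (e : Sym2 (Fin n)) : kerFun W x e ≤ 1 := by
  induction e using Sym2.ind with
  | _ a b =>
    rw [kerFun_mk]
    have h1 := hW.2.2.2 (x a) (x b)
    have h2 := hW.2.2.2 (x b) (x a)
    linarith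

lemma IsGraphon.compl {W : I → I → ℝ} (hW : IsGraphon W) : IsGraphon (compl' W) := by
  refine ⟨measurable_const.sub hW.1, fun x y => ?_, fun x y => ?_, fun x y => ?_⟩
  · simp only [compl', hW.2.1]
  · have := hW.2.2.2 x y; simp only [compl']; linarith
  · have := hW.2.2.1 x y; simp only [compl']; linarith

lemma prod_kerFun_nonneg {W : I → I → ℝ} (hW : IsGraphon W) {n : ℕ} (x : Fin n → I)
    (s : Finset (Sym2 (Fin n))) : 0 ≤ ∏ e ∈ s, kerFun W x e :=
  Finset.prod_nonneg fun e _ => kerFun_nonneg hW x e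

lemma prod_kerFun_le_one {W : I → I → ℝ} (hW : IsGraphon W) {n : ℕ} (x : Fin n → I)
    (s : Finset (Sym2 (Fin n))) : ∏ e ∈ s, kerFun W x e ≤ 1 :=
  Finset.prod_le_one (fun e _ => kerFun_nonneg hW x e) (fun e _ => kerFun_le_one hW x e)

lemma prod_kerFun_integrable {W : I → I → ℝ} (hW : IsGraphon W) {n : ℕ}
    (s : Finset (Sym2 (Fin n))) :
    Integrable (fun x : Fin n → I => ∏ e ∈ s, kerFun W x e) := by
  refine (integrable_const (1 : ℝ)).mono'
    (Finset.measurable_prod s fun e _ => kerFun_measurable hW.1 e).aestronglyMeasurable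
    (ae_of_all _ fun x => ?_)
  rw [Real.norm_eq_abs, abs_of_nonneg (prod_kerFun_nonneg hW x s)]
  exact prod_kerFun_le_one hW x s

lemma homDensity_nonneg {W : I → I → ℝ} (hW : IsGraphon W) {n : ℕ}
    (G : SimpleGraph (Fin n)) [Fintype G.edgeSet] : 0 ≤ homDensity G W := by
  rw [homDensity_eq]
  exact integral_nonneg fun x => prod_kerFun_nonneg hW x _

lemma edgeFinset_top2 [i : Fintype (⊤ : SimpleGraph (Fin 2)).edgeSet] :
    (⊤ : SimpleGraph (Fin 2)).edgeFinset = {s(0, 1)} := by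
  ext e
  induction e using Sym2.ind with
  | _ a b =>
    simp only [SimpleGraph.mem_edgeFinset, SimpleGraph.mem_edgeSet, SimpleGraph.top_adj,
      Finset.mem_singleton]
    revert a b; decide

lemma homDensity_K2 (W : I → I → ℝ) :
    homDensity (⊤ : SimpleGraph (Fin 2)) W = ∫ x : Fin 2 → I, kerFun W x s(0, 1) := by
  rw [homDensity_eq, edgeFinset_top2]
  simp

lemma homDensity_K2_add {W : I → I → ℝ} (hW : IsGraphon W) :
    homDensity (⊤ : SimpleGraph (Fin 2)) W
      + homDensity (⊤ : SimpleGraph (Fin 2)) (compl' W) = 1 := by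
  rw [homDensity_K2, homDensity_K2]
  have hint : Integrable (fun x : Fin 2 → I => kerFun W x s(0, 1)) := by
    simpa using prod_kerFun_integrable hW ({s(0, 1)} : Finset (Sym2 (Fin 2)))
  have hco : (fun x : Fin 2 → I => kerFun (compl' W) x s(0, 1))
      = fun x => 1 - kerFun W x s(0, 1) := by
    funext x
    simp only [kerFun_mk, compl']
    ring
  rw [hco, integral_sub (integrable_const 1) hint, integral_const]
  simp

lemma integral_kerFun_three {W : I → I → ℝ} (hW : IsGraphon W) :
    ∫ x : Fin 3 → I, kerFun W x s(0, 1) = ∫ y : Fin 2 → I, kerFun W y s(0, 1) := by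
  have hmp := measurePreserving_piFinSuccAbove (fun _ : Fin 3 => (volume : Measure I))
    (Fin.last 2)
  have hcomp := hmp.integral_comp (MeasurableEquiv.measurableEmbedding _)
    (fun p : I × (Fin 2 → I) => kerFun W p.2 s(0, 1))
  have hleft : ∀ x : Fin 3 → I,
      kerFun W ((MeasurableEquiv.piFinSuccAbove (fun _ : Fin 3 => I) (Fin.last 2)) x).2 s(0, 1)
        = kerFun W x s(0, 1) := by
    intro x
    have h0 : Fin.castSucc (0 : Fin 2) = (0 : Fin 3) := by decide
    have h1 : Fin.castSucc (1 : Fin 2) = (1 : Fin 3) := by decide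
    have h2 : Fin.succAbove (2 : Fin 3) (1 : Fin 2) = (1 : Fin 3) := by decide
    simp [kerFun_mk, MeasurableEquiv.piFinSuccAbove, Fin.removeNth, Fin.init, h0, h1, h2]
  calc (∫ x : Fin 3 → I, kerFun W x s(0, 1))
      = ∫ x : Fin 3 → I,
          kerFun W ((MeasurableEquiv.piFinSuccAbove (fun _ : Fin 3 => I) (Fin.last 2)) x).2 s(0, 1)
          ∂(Measure.pi fun _ => volume) := by
        rw [← MeasureTheory.volume_pi]
        exact integral_congr_ae (Filter.Eventually.of_forall fun x => (hleft x).symm)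
    _ = ∫ p : ↑I × (Fin 2 → ↑I), kerFun W p.2 s(0, 1)
          ∂(volume.prod (Measure.pi fun _ => volume)) := hcomp
    _ = ∫ y : Fin 2 → I, kerFun W y s(0, 1) ∂(Measure.pi fun _ => volume) := by
        rw [integral_fun_snd (fun y : Fin 2 → I => kerFun W y s(0, 1))]
        simp
    _ = ∫ y : Fin 2 → I, kerFun W y s(0, 1) := by rw [← MeasureTheory.volume_pi]

lemma homDensity_K3_le {W : I → I → ℝ} (hW : IsGraphon W) :
    homDensity (⊤ : SimpleGraph (Fin 3)) W ≤ homDensity (⊤ : SimpleGraph (Fin 2)) W := by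
  rw [homDensity_eq, homDensity_K2, ← integral_kerFun_three hW]
  have hmem : s(0, 1) ∈ (⊤ : SimpleGraph (Fin 3)).edgeFinset := by
    simp only [SimpleGraph.mem_edgeFinset, SimpleGraph.mem_edgeSet, SimpleGraph.top_adj]
    decide
  refine integral_mono (prod_kerFun_integrable hW _) ?_ fun x => ?_
  · simpa using prod_kerFun_integrable hW ({s(0, 1)} : Finset (Sym2 (Fin 3)))
  · calc ∏ e ∈ (⊤ : SimpleGraph (Fin 3)).edgeFinset, kerFun W x e
        = kerFun W x s(0, 1)
            * ∏ e ∈ (⊤ : SimpleGraph (Fin 3)).edgeFinset.erase s(0, 1), kerFun W x e :=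
          (Finset.mul_prod_erase _ _ hmem).symm
      _ ≤ kerFun W x s(0, 1) * 1 :=
          mul_le_mul_of_nonneg_left (prod_kerFun_le_one hW x _) (kerFun_nonneg hW x _)
      _ = kerFun W x s(0, 1) := mul_one _

lemma radon {x y p q : ℝ} (n : ℕ) (hx : 0 ≤ x) (hy : 0 ≤ y) (hxp : x ≤ p) (hyq : y ≤ q)
    (hpq : p + q = 1) :
    (x + y) ^ (n + 1) ≤ x ^ (n + 1) / p ^ n + y ^ (n + 1) / q ^ n := by
  have hp : 0 ≤ p := hx.trans hxp
  have hq : 0 ≤ q := hy.trans hyq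
  rcases eq_or_lt_of_le hp with hp0 | hp0
  · have hx0 : x = 0 := le_antisymm (by linarith) hx
    have hq1 : q = 1 := by linarith
    simp [hx0, hq1]
  rcases eq_or_lt_of_le hq with hq0 | hq0
  · have hy0 : y = 0 := le_antisymm (by linarith) hy
    have hp1 : p = 1 := by linarith
    simp [hy0, hp1]
  · have key := (convexOn_pow (n + 1)).2 (Set.mem_Ici.2 (div_nonneg hx hp))
      (Set.mem_Ici.2 (div_nonneg hy hq)) hp hq hpq
    have e1 : p • (x / p) + q • (y / q) = x + y := by
      rw [smul_eq_mul, smul_eq_mul, mul_div_cancel₀ x hp0.ne', mul_div_cancel₀ y hq0.ne']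
    have e2 : p • ((x / p) ^ (n + 1)) = x ^ (n + 1) / p ^ n := by
      rw [smul_eq_mul, div_pow]
      field_simp
      ring
    have e3 : q • ((y / q) ^ (n + 1)) = y ^ (n + 1) / q ^ n := by
      rw [smul_eq_mul, div_pow]
      field_simp
      ring
    rw [e1, e2, e3] at key
    exact key

end Helpers

/-- `K_{1,1,t}` is common: assuming the Cauchy–Schwarz-type inequalities
`t_{K_{1,1,t}}(W) ≥ t_{K₃}(W)^t / t_{K₂}(W)^{t-1}` (and the same for `1-W`) and
`m_{K₃}(W) ≥ 1/4`, we get `m_{K_{1,1,t}}(W) ≥ 2^{1-e(K_{1,1,t})} = 2^{-2t}`. -/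
theorem K11t_common (t : ℕ) (ht : 1 ≤ t)
    (W : unitInterval → unitInterval → ℝ) (hW : IsGraphon W)
    (h1 : homDensity (⊤ : SimpleGraph (Fin 3)) W ^ t /
        homDensity (⊤ : SimpleGraph (Fin 2)) W ^ (t - 1) ≤ homDensity (K11 t) W)
    (h2 : homDensity (⊤ : SimpleGraph (Fin 3)) (compl' W) ^ t /
        homDensity (⊤ : SimpleGraph (Fin 2)) (compl' W) ^ (t - 1) ≤
      homDensity (K11 t) (compl' W))
    (hK3 : 1 / 4 ≤ homDensity (⊤ : SimpleGraph (Fin 3)) W +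
      homDensity (⊤ : SimpleGraph (Fin 3)) (compl' W)) :
    (2 : ℝ) ^ (-(2 * t : ℤ)) ≤ homDensity (K11 t) W + homDensity (K11 t) (compl' W) := by
  obtain ⟨n, rfl⟩ : ∃ n, t = n + 1 := ⟨t - 1, (Nat.succ_pred_eq_of_pos ht).symm⟩
  have hW' : IsGraphon (compl' W) := hW.compl
  have hx0 : 0 ≤ homDensity (⊤ : SimpleGraph (Fin 3)) W := homDensity_nonneg hW _
  have hy0 : 0 ≤ homDensity (⊤ : SimpleGraph (Fin 3)) (compl' W) := homDensity_nonneg hW' _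
  have hxp := homDensity_K3_le hW
  have hyq := homDensity_K3_le hW'
  have hpq := homDensity_K2_add hW
  have hr := radon n hx0 hy0 hxp hyq hpq
  have h14 : (4⁻¹ : ℝ) ^ (n + 1)
      ≤ (homDensity (⊤ : SimpleGraph (Fin 3)) W
          + homDensity (⊤ : SimpleGraph (Fin 3)) (compl' W)) ^ (n + 1) := by
    refine pow_le_pow_left₀ (by norm_num) ?_ _
    linarith
  have hpow : (2 : ℝ) ^ (-(2 * ((n + 1 : ℕ)) : ℤ)) = (4⁻¹ : ℝ) ^ (n + 1) := by
    rw [zpow_neg, show (2 * ((n + 1 : ℕ)) : ℤ) = ((2 * (n + 1) : ℕ) : ℤ) by push_cast; ring,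
      zpow_natCast, pow_mul, ← inv_pow]
    norm_num
  have hsub : n + 1 - 1 = n := by omega
  rw [hsub] at h1 h2
  rw [hpow]
  linarith
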